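/- arXiv:2204.07165 — 2 statements merged into one kernel-verified Lean document; each statement's English description precedes it below -/
import Mathlib

section
/- Let m ≥ 1 and let M be the Chein double M(G,2) of the dicyclic group G = QuaternionGroup m, with c the unique element of order 2 of G. Then M contains exactly one element z with z ≠ (1,0) and z·z = (1,0), namely z = (c,0). -/
namespace PowerGraphPaper

variable {M : Type*}

/-- Iterated power with respect to a binary operation `mul` and identity `one`:
`x ^ 0 = 1` and `x ^ (k+1) = x * x ^ k`. -/
def opow (mul : M → M → M) (one : M) (x : M) : ℕ → M
  | 0 => one
  | k + 1 => mul x (opow mul one x k)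

/-- The order of an element: the least `k > 0` with `x ^ k = 1` (and `0` if there is none). -/
noncomputable def oorder (mul : M → M → M) (one : M) (x : M) : ℕ :=
  sInf {k : ℕ | 0 < k ∧ opow mul one x k = one}

/-- The inverse of an element of a finite power-associative loop: `x ^ (|x| - 1)`. -/
noncomputable def oinv (mul : M → M → M) (one : M) (x : M) : M :=
  opow mul one x (oorder mul one x - 1)

/-- A subloop: a subset containing the identity and closed under multiplication and inverses. -/
def IsSubloop (mul : M → M → M) (one : M) (S : Set M) : Prop :=
  one ∈ S ∧ (∀ x ∈ S, ∀ y ∈ S, mul x y ∈ S) ∧ ∀ x ∈ S, oinv mul one x ∈ S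

/-- The multiplication is associative on the subset `S`. -/
def IsAssocOn (mul : M → M → M) (S : Set M) : Prop :=
  ∀ x ∈ S, ∀ y ∈ S, ∀ z ∈ S, mul (mul x y) z = mul x (mul y z)

/-- The multiplication is commutative on the subset `S`. -/
def IsCommOn (mul : M → M → M) (S : Set M) : Prop :=
  ∀ x ∈ S, ∀ y ∈ S, mul x y = mul y x

/-- A subset is cyclic if it is the set of powers of one of its elements. -/
def IsCyclicSubloop (mul : M → M → M) (one : M) (S : Set M) : Prop :=
  ∃ g ∈ S, S = {y | ∃ k : ℕ, opow mul one g k = y}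

/-- A loop structure on a type `M`: a binary operation all of whose left and right
translations are bijections, together with a two-sided identity. -/
structure LoopStr (M : Type*) where
  mul : M → M → M
  one : M
  mulLeft_bijective : ∀ a, Function.Bijective (mul a)
  mulRight_bijective : ∀ a, Function.Bijective (fun x => mul x a)
  one_mul : ∀ x, mul one x = x
  mul_one : ∀ x, mul x one = x

namespace LoopStr

/-- The Moufang identity `z(x(zy)) = ((zx)z)y`. -/
def IsMoufang (L : LoopStr M) : Prop :=
  ∀ x y z, L.mul z (L.mul x (L.mul z y)) = L.mul (L.mul (L.mul z x) z) y

/-- Powers in a loop. -/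
def pow (L : LoopStr M) : M → ℕ → M := opow L.mul L.one

/-- Order of an element of a loop. -/
noncomputable def order (L : LoopStr M) : M → ℕ := oorder L.mul L.one

/-- Inverse of an element of a loop. -/
noncomputable def inv (L : LoopStr M) : M → M := oinv L.mul L.one

/-- The multiplication of the loop is associative. -/
def IsAssociative (L : LoopStr M) : Prop :=
  ∀ x y z, L.mul (L.mul x y) z = L.mul x (L.mul y z)

/-- `M` is a cyclic group: the multiplication is associative and some element has
every element as a power. -/
def IsCyclicGroup (L : LoopStr M) : Prop :=
  L.IsAssociative ∧ ∃ g, ∀ x, ∃ k : ℕ, L.pow g k = x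

/-- `M` is a group isomorphic to a generalized quaternion group
`QuaternionGroup (2 ^ k)` (of order `2 ^ (k + 2)`) for some `k ≥ 1`. -/
def IsGeneralizedQuaternion (L : LoopStr M) : Prop :=
  ∃ k : ℕ, 1 ≤ k ∧ ∃ φ : M ≃ QuaternionGroup (2 ^ k),
    ∀ x y, φ (L.mul x y) = φ x * φ y

/-- `M` is a generalized octonion loop: it is nonassociative and every associative
commutative subloop is cyclic. -/
def IsGeneralizedOctonion (L : LoopStr M) : Prop :=
  ¬ L.IsAssociative ∧ ∀ S : Set M, IsSubloop L.mul L.one S →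
    IsAssocOn L.mul S → IsCommOn L.mul S → IsCyclicSubloop L.mul L.one S

/-- The undirected power graph of a loop: distinct `x` and `y` are adjacent iff one
is a power of the other. -/
def powerGraph (L : LoopStr M) : SimpleGraph M where
  Adj x y := x ≠ y ∧ ∃ k : ℕ, L.pow x k = y ∨ L.pow y k = x
  symm := ⟨by
    rintro x y ⟨hne, k, hk⟩
    exact ⟨hne.symm, k, hk.symm⟩⟩
  loopless := ⟨fun x h => h.1 rfl⟩

/-- The left translation by `a`, as a permutation. -/
noncomputable def leftTrans (L : LoopStr M) (a : M) : Equiv.Perm M :=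
  Equiv.ofBijective _ (L.mulLeft_bijective a)

/-- The right translation by `a`, as a permutation. -/
noncomputable def rightTrans (L : LoopStr M) (a : M) : Equiv.Perm M :=
  Equiv.ofBijective _ (L.mulRight_bijective a)

/-- The multiplication group of a loop: the group of permutations generated by all
left and right translations. -/
noncomputable def multGroup (L : LoopStr M) : Subgroup (Equiv.Perm M) :=
  Subgroup.closure (Set.range L.leftTrans ∪ Set.range L.rightTrans)

/-- An inner mapping: an element of the multiplication group fixing the identity. -/
def IsInnerMapping (L : LoopStr M) (φ : Equiv.Perm M) : Prop :=
  φ ∈ L.multGroup ∧ φ L.one = L.one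

end LoopStr

/-- The multiplication of the Chein double `M(G, 2)` of a group `G` with respect to a
central element `c ≠ 1`. -/
def cheinMul {G : Type*} [Group G] (c : G) (x y : G × ZMod 2) : G × ZMod 2 :=
  if x.2 = 0 then
    if y.2 = 0 then (x.1 * y.1, 0) else (y.1 * x.1, 1)
  else
    if y.2 = 0 then (x.1 * y.1⁻¹, 1) else (c * y.1⁻¹ * x.1, 0)

/-- The unique element of order `2` of the dicyclic group `QuaternionGroup m`
(for `m ≥ 1`), namely `a ^ m`. -/
def quatC (m : ℕ) : QuaternionGroup m := QuaternionGroup.a (m : ZMod (2 * m))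


lemma mcast_ne_zero {m : ℕ} (hm : 1 ≤ m) : ((m : ZMod (2 * m)) ≠ 0) := by
  haveI : NeZero (2 * m) := ⟨by omega⟩
  rw [Ne, ZMod.natCast_eq_zero_iff]
  intro h
  exact absurd (Nat.le_of_dvd (by omega) h) (by omega)

lemma sq_eq_one {m : ℕ} (hm : 1 ≤ m) (g : QuaternionGroup m) (hg : g * g = 1) :
    g = 1 ∨ g = quatC m := by
  haveI : NeZero (2 * m) := ⟨by omega⟩
  cases g with
  | a i =>
    rw [QuaternionGroup.a_mul_a, QuaternionGroup.one_def] at hg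
    have hi : ((i.val : ℕ) : ZMod (2 * m)) = i := by rw [ZMod.natCast_val, ZMod.cast_id]
    have h2 : ((i.val + i.val : ℕ) : ZMod (2 * m)) = 0 := by
      rw [Nat.cast_add, hi]
      exact QuaternionGroup.a.inj hg
    rw [ZMod.natCast_eq_zero_iff] at h2
    obtain ⟨k, hk⟩ := h2
    have hv : i.val < 2 * m := ZMod.val_lt i
    have hk2 : k < 2 := by nlinarith
    have : i.val = 0 ∨ i.val = m := by interval_cases k <;> omega
    rcases this with h | h
    · left; rw [QuaternionGroup.one_def, ← hi, h]; norm_num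
    · right; rw [quatC, ← hi, h]
  | xa i =>
    rw [QuaternionGroup.xa_mul_xa, QuaternionGroup.one_def] at hg
    have := QuaternionGroup.a.inj hg
    simp at this
    exact absurd this (mcast_ne_zero hm)

lemma quatC_sq {m : ℕ} : quatC m * quatC m = 1 := by
  rw [quatC, QuaternionGroup.a_mul_a, QuaternionGroup.one_def]
  congr 1
  rw [← Nat.cast_add, ← two_mul, ZMod.natCast_self]

lemma quatC_ne_one {m : ℕ} (hm : 1 ≤ m) : quatC m ≠ 1 := by
  rw [quatC, QuaternionGroup.one_def]
  intro h
  exact mcast_ne_zero hm (QuaternionGroup.a.inj h)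

end PowerGraphPaper

/-- **Lemma.** The Chein double `M(Q_{4m}, 2)` of a dicyclic group contains a unique
element of order `2`, namely the image `(c, 0)` of the unique element of order `2`
of `Q_{4m}`. -/
theorem PowerGraphPaper.chein_double_unique_involution
    (m : ℕ) (hm : 1 ≤ m) :
    {z : QuaternionGroup m × ZMod 2 |
        z ≠ ((1 : QuaternionGroup m), (0 : ZMod 2)) ∧
        cheinMul (quatC m) z z = ((1 : QuaternionGroup m), (0 : ZMod 2))} =
      {((quatC m, 0) : QuaternionGroup m × ZMod 2)} := by
  ext z
  obtain ⟨g, e⟩ := z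
  simp only [Set.mem_setOf_eq, Set.mem_singleton_iff, Prod.mk.injEq, ne_eq, Prod.ext_iff]
  have he : e = 0 ∨ e = 1 := by fin_cases e <;> [exact Or.inl rfl; exact Or.inr rfl]
  constructor
  · rintro ⟨hne, hsq⟩
    rcases he with rfl | rfl
    · simp only [cheinMul] at hsq
      norm_num at hsq
      rcases sq_eq_one hm g hsq with h | h
      · exact absurd ⟨h, rfl⟩ hne
      · exact ⟨h, rfl⟩
    · exfalso
      simp only [cheinMul] at hsq
      norm_num at hsq
      exact quatC_ne_one hm hsq
  · rintro ⟨rfl, rfl⟩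
    refine ⟨fun h => quatC_ne_one hm h.1, ?_⟩
    simp [cheinMul, quatC_sq]
end

section
/- Let k ≥ 1 and let M be the Chein double M(QuaternionGroup (2^k), 2). Then every subloop of M on which the multiplication is associative and commutative is cyclic, i.e., equals the set of powers of one of its elements. -/
namespace PowerGraphPaper

variable {M : Type*}

section Aux

variable {G : Type*} [Group G] {c : G}

@[simp] lemma cheinMul_00 (g h : G) : cheinMul c (g, (0 : ZMod 2)) (h, 0) = (g * h, 0) := by
  simp [cheinMul]

@[simp] lemma cheinMul_01 (g h : G) : cheinMul c (g, (0 : ZMod 2)) (h, 1) = (h * g, 1) := by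
  simp [cheinMul]

@[simp] lemma cheinMul_10 (g h : G) : cheinMul c (g, (1 : ZMod 2)) (h, 0) = (g * h⁻¹, 1) := by
  simp [cheinMul]

@[simp] lemma cheinMul_11 (g h : G) : cheinMul c (g, (1 : ZMod 2)) (h, 1) = (c * h⁻¹ * g, 0) := by
  simp [cheinMul]

lemma opow_snd_zero (g : G) :
    ∀ j, opow (cheinMul c) (1, (0 : ZMod 2)) (g, 0) j = (g ^ j, 0)
  | 0 => by simp [opow]
  | j + 1 => by rw [opow, opow_snd_zero g j, cheinMul_00, ← pow_succ']

lemma zmod_add_self_eq_zero {n : ℕ} (hn : 0 < n) {j : ZMod (2 * n)}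
    (h : j + j = 0) : j = 0 ∨ j = (n : ZMod (2 * n)) := by
  haveI : NeZero (2 * n) := ⟨by omega⟩
  have hv : ((j.val : ℕ) : ZMod (2 * n)) = j := ZMod.natCast_zmod_val j
  have h2 : ((j.val + j.val : ℕ) : ZMod (2 * n)) = 0 := by push_cast [hv]; exact h
  have hdvd : 2 * n ∣ j.val + j.val := (ZMod.natCast_eq_zero_iff _ _).1 h2
  have hlt : j.val < 2 * n := ZMod.val_lt j
  obtain ⟨t, ht⟩ := hdvd
  have htlt : t < 2 := by nlinarith
  have : j.val = 0 ∨ j.val = n := by interval_cases t <;> omega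
  rcases this with h0 | h0
  · left; rw [← hv, h0]; simp
  · right; rw [← hv, h0]

end Aux

section QAux

variable {n : ℕ}

open QuaternionGroup

lemma quat_n_add_n : ((n : ZMod (2 * n)) + n) = 0 := by
  have : ((n + n : ℕ) : ZMod (2 * n)) = 0 := by
    rw [ZMod.natCast_eq_zero_iff]; exact ⟨1, by ring⟩
  push_cast at this; exact this

lemma quatC_mul_self : quatC n * quatC n = 1 := by
  rw [quatC, a_mul_a, quat_n_add_n, one_def]

lemma quatC_inv : (quatC n)⁻¹ = quatC n :=
  inv_eq_of_mul_eq_one_right quatC_mul_self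

lemma quat_sq_eq_one (hn : 0 < n) {h : QuaternionGroup n} (hh : h * h = 1) :
    h = 1 ∨ h = quatC n := by
  rcases h with j | j
  · rw [a_mul_a, one_def] at hh
    have : j + j = 0 := by injection hh
    rcases zmod_add_self_eq_zero hn this with h0 | h0
    · left; rw [one_def, h0]
    · right; rw [quatC, h0]
  · exfalso
    rw [xa_mul_xa, one_def] at hh
    have hn0 : ((n : ZMod (2 * n))) = 0 := by
      have : (n : ZMod (2 * n)) + j - j = 0 := by injection hh
      simpa using this
    rw [ZMod.natCast_eq_zero_iff] at hn0
    have := Nat.le_of_dvd hn hn0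
    omega

end QAux

end PowerGraphPaper

/-- **Theorem.** In the Chein double `M(QuaternionGroup (2^k), 2)`, every subloop on
which the multiplication is associative and commutative is cyclic. -/
theorem PowerGraphPaper.chein_double_assoc_comm_subloop_cyclic
    (k : ℕ) (hk : 1 ≤ k)
    (S : Set (QuaternionGroup (2 ^ k) × ZMod 2))
    (hS : IsSubloop (cheinMul (quatC (2 ^ k)))
      ((1 : QuaternionGroup (2 ^ k)), (0 : ZMod 2)) S)
    (hassoc : IsAssocOn (cheinMul (quatC (2 ^ k))) S)
    (hcomm : IsCommOn (cheinMul (quatC (2 ^ k))) S) :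
    IsCyclicSubloop (cheinMul (quatC (2 ^ k)))
      ((1 : QuaternionGroup (2 ^ k)), (0 : ZMod 2)) S := by
  classical
  have hn : 0 < 2 ^ k := Nat.pow_pos (by norm_num)
  obtain ⟨hone, hmul, -⟩ := hS
  have h01 : ∀ t : ZMod 2, t = 0 ∨ t = 1 := by decide
  have hci : (quatC (2 ^ k))⁻¹ = quatC (2 ^ k) := quatC_inv
  by_cases hA : ∃ g : QuaternionGroup (2 ^ k), (g, (1 : ZMod 2)) ∈ S
  · -- Case A: some element with second component 1
    obtain ⟨g, hg⟩ := hA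
    have step0 : ∀ h' : QuaternionGroup (2 ^ k), (h', (0 : ZMod 2)) ∈ S →
        h' = 1 ∨ h' = quatC (2 ^ k) := by
      intro h' hm
      have hco := hcomm _ hm _ hg
      rw [cheinMul_01, cheinMul_10] at hco
      have h1 : g * h' = g * h'⁻¹ := (Prod.mk.injEq _ _ _ _ ▸ hco).1
      have h2 : h' = h'⁻¹ := mul_left_cancel h1
      exact quat_sq_eq_one hn (eq_inv_iff_mul_eq_one.mp h2)
    have step1 : ∀ h' : QuaternionGroup (2 ^ k), (h', (1 : ZMod 2)) ∈ S →
        h' = g ∨ h' = g * quatC (2 ^ k) := by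
      intro h' hm
      have hmem2 := hmul _ hg _ hm
      rw [cheinMul_11] at hmem2
      rcases step0 _ hmem2 with h1 | h1
      · right
        have e1 : quatC (2 ^ k) * h'⁻¹ = g⁻¹ := mul_eq_one_iff_eq_inv.mp h1
        have e2 : h'⁻¹ = (g * quatC (2 ^ k))⁻¹ := by
          calc h'⁻¹ = (quatC (2 ^ k))⁻¹ * (quatC (2 ^ k) * h'⁻¹) := by rw [inv_mul_cancel_left]
          _ = (quatC (2 ^ k))⁻¹ * g⁻¹ := by rw [e1]
          _ = (g * quatC (2 ^ k))⁻¹ := (mul_inv_rev _ _).symm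
        exact inv_injective e2
      · left
        have e1 : quatC (2 ^ k) * (h'⁻¹ * g) = quatC (2 ^ k) * 1 := by
          rw [mul_one, ← mul_assoc]; exact h1
        exact inv_mul_eq_one.mp (mul_left_cancel e1)
    have p1 : opow (cheinMul (quatC (2 ^ k))) (1, (0 : ZMod 2)) (g, 1) 1 = (g, 1) := by
      simp [opow]
    have p2 : opow (cheinMul (quatC (2 ^ k))) (1, (0 : ZMod 2)) (g, 1) 2 = (quatC (2 ^ k), 0) := by
      simp [opow]
    have p3 : opow (cheinMul (quatC (2 ^ k))) (1, (0 : ZMod 2)) (g, 1) 3 =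
        (g * quatC (2 ^ k), 1) := by
      simp [opow, hci]
    have pmem : ∀ j, opow (cheinMul (quatC (2 ^ k))) (1, (0 : ZMod 2)) (g, 1) j ∈ S := by
      intro j
      induction j with
      | zero => exact hone
      | succ j ih => exact hmul _ hg _ ih
    refine ⟨(g, 1), hg, ?_⟩
    ext y
    simp only [Set.mem_setOf_eq]
    constructor
    · intro hy
      obtain ⟨h', e⟩ := y
      rcases h01 e with rfl | rfl
      · rcases step0 _ hy with rfl | rfl
        · exact ⟨0, rfl⟩
        · exact ⟨2, p2⟩
      · rcases step1 _ hy with rfl | rfl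
        · exact ⟨1, p1⟩
        · exact ⟨3, p3⟩
    · rintro ⟨j, rfl⟩
      exact pmem j
  · -- Case B : all elements have second component 0
    have hB0 : ∀ (h' : QuaternionGroup (2 ^ k)) (e : ZMod 2), (h', e) ∈ S → e = 0 := by
      intro h' e hm
      rcases h01 e with rfl | rfl
      · rfl
      · exact absurd ⟨h', hm⟩ hA
    by_cases hB1 : ∃ i, (QuaternionGroup.xa i, (0 : ZMod 2)) ∈ S
    · -- Case B1 : some xa i in S
      obtain ⟨i, hxi⟩ := hB1
      have stepA : ∀ j, (QuaternionGroup.a j, (0 : ZMod 2)) ∈ S →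
          j = 0 ∨ j = ((2 ^ k : ℕ) : ZMod (2 * 2 ^ k)) := by
        intro j hm
        have hco := hcomm _ hm _ hxi
        rw [cheinMul_00, cheinMul_00, QuaternionGroup.a_mul_xa,
          QuaternionGroup.xa_mul_a] at hco
        simp only [Prod.mk.injEq, QuaternionGroup.xa.injEq, and_true] at hco
        have h2 : j + j = 0 := by linear_combination -hco
        exact zmod_add_self_eq_zero hn h2
      have stepX : ∀ j, (QuaternionGroup.xa j, (0 : ZMod 2)) ∈ S →
          j = i ∨ j = i + ((2 ^ k : ℕ) : ZMod (2 * 2 ^ k)) := by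
        intro j hm
        have hco := hcomm _ hm _ hxi
        rw [cheinMul_00, cheinMul_00, QuaternionGroup.xa_mul_xa,
          QuaternionGroup.xa_mul_xa] at hco
        simp only [Prod.mk.injEq, QuaternionGroup.a.injEq, and_true] at hco
        have h2 : (j - i) + (j - i) = 0 := by linear_combination -hco
        rcases zmod_add_self_eq_zero hn h2 with h0 | h0
        · left; linear_combination h0
        · right; linear_combination h0
      have q2 : (QuaternionGroup.xa i : QuaternionGroup (2 ^ k)) ^ 2 = QuaternionGroup.a (2 ^ k : ℕ) := by
        rw [pow_two, QuaternionGroup.xa_mul_xa]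
        congr 1; ring
      have q3 : (QuaternionGroup.xa i : QuaternionGroup (2 ^ k)) ^ 3 =
          QuaternionGroup.xa (i + ((2 ^ k : ℕ) : ZMod (2 * 2 ^ k))) := by
        rw [pow_succ, q2, QuaternionGroup.a_mul_xa]
        congr 1
        linear_combination -(quat_n_add_n (n := 2 ^ k))
      have pmem : ∀ u, opow (cheinMul (quatC (2 ^ k))) (1, (0 : ZMod 2))
          (QuaternionGroup.xa i, 0) u ∈ S := by
        intro u
        induction u with
        | zero => exact hone
        | succ u ih => exact hmul _ hxi _ ih
      refine ⟨(QuaternionGroup.xa i, 0), hxi, ?_⟩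
      ext y
      simp only [Set.mem_setOf_eq]
      constructor
      · intro hy
        obtain ⟨h', e⟩ := y
        have he := hB0 _ _ hy
        subst he
        rcases h' with j | j
        · rcases stepA j hy with rfl | rfl
          · exact ⟨0, by rw [opow_snd_zero, pow_zero, QuaternionGroup.one_def]⟩
          · exact ⟨2, by rw [opow_snd_zero, q2]⟩
        · rcases stepX j hy with rfl | rfl
          · exact ⟨1, by rw [opow_snd_zero, pow_one]⟩
          · exact ⟨3, by rw [opow_snd_zero, q3]⟩
      · rintro ⟨u, rfl⟩
        exact pmem u
    · -- Case B2 : S consists only of elements (a j, 0)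
      have hall : ∀ y ∈ S, ∃ j, y = (QuaternionGroup.a j, (0 : ZMod 2)) := by
        intro y hy
        obtain ⟨h', e⟩ := y
        have he := hB0 _ _ hy
        subst he
        rcases h' with j | j
        · exact ⟨j, rfl⟩
        · exact absurd ⟨j, hy⟩ hB1
      have hsmul : ∀ (t : ℕ) (j : ZMod (2 * 2 ^ k)),
          (QuaternionGroup.a j, (0 : ZMod 2)) ∈ S →
          (QuaternionGroup.a (t • j), (0 : ZMod 2)) ∈ S := by
        intro t j hj
        induction t with
        | zero =>
          rw [zero_nsmul, show (QuaternionGroup.a 0 : QuaternionGroup (2 ^ k)) = 1 from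
            QuaternionGroup.one_def.symm]
          exact hone
        | succ t ih =>
          have hm := hmul _ ih _ hj
          rw [cheinMul_00, QuaternionGroup.a_mul_a] at hm
          rw [succ_nsmul]
          exact hm
      let J : AddSubgroup (ZMod (2 * 2 ^ k)) :=
        { carrier := {j | (QuaternionGroup.a j, (0 : ZMod 2)) ∈ S}
          zero_mem' := by
            show (QuaternionGroup.a 0, (0 : ZMod 2)) ∈ S
            rw [show (QuaternionGroup.a 0 : QuaternionGroup (2 ^ k)) = 1 from
              QuaternionGroup.one_def.symm]
            exact hone
          add_mem' := by
            intro x y hx hy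
            have hm := hmul _ hx _ hy
            rwa [cheinMul_00, QuaternionGroup.a_mul_a] at hm
          neg_mem' := by
            intro x hx
            have h1 : ((2 * 2 ^ k - 1) + 1) • x = (0 : ZMod (2 * 2 ^ k)) := by
              rw [show 2 * 2 ^ k - 1 + 1 = 2 * 2 ^ k from by omega, nsmul_eq_mul,
                ZMod.natCast_self, zero_mul]
            rw [succ_nsmul] at h1
            have h2 : (2 * 2 ^ k - 1) • x = -x := eq_neg_of_add_eq_zero_left h1
            have h3 := hsmul (2 * 2 ^ k - 1) x hx
            rw [h2] at h3
            exact h3 }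
      obtain ⟨⟨j₀, hj₀⟩, hgen⟩ := IsAddCyclic.exists_generator (α := J)
      have hNz : ((2 * 2 ^ k : ℕ) : ℤ) • j₀ = (0 : ZMod (2 * 2 ^ k)) := by
        rw [natCast_zsmul, nsmul_eq_mul, ZMod.natCast_self, zero_mul]
      have key : ∀ x : ZMod (2 * 2 ^ k), x ∈ J → ∃ u : ℕ, u • j₀ = x := by
        intro x hx
        obtain ⟨z, hz⟩ := AddSubgroup.mem_zmultiples_iff.mp (hgen ⟨x, hx⟩)
        have hz' : z • j₀ = x := by
          have hv := congrArg Subtype.val hz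
          simpa using hv
        have hNpos : (0 : ℤ) < ((2 * 2 ^ k : ℕ) : ℤ) := by
          have : 0 < 2 * 2 ^ k := by omega
          exact_mod_cast this
        have hmod : ((z % ((2 * 2 ^ k : ℕ) : ℤ)).toNat : ℤ) = z % ((2 * 2 ^ k : ℕ) : ℤ) :=
          Int.toNat_of_nonneg (Int.emod_nonneg z (by omega))
        have hzdecomp : z • j₀ = (z % ((2 * 2 ^ k : ℕ) : ℤ)) • j₀ := by
          have h := Int.mul_ediv_add_emod z ((2 * 2 ^ k : ℕ) : ℤ)
          calc z • j₀ = (((2 * 2 ^ k : ℕ) : ℤ) * (z / ((2 * 2 ^ k : ℕ) : ℤ)) +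
                z % ((2 * 2 ^ k : ℕ) : ℤ)) • j₀ := by rw [h]
          _ = (((2 * 2 ^ k : ℕ) : ℤ) * (z / ((2 * 2 ^ k : ℕ) : ℤ))) • j₀ +
                (z % ((2 * 2 ^ k : ℕ) : ℤ)) • j₀ := add_zsmul _ _ _
          _ = (z % ((2 * 2 ^ k : ℕ) : ℤ)) • j₀ := by
                have hc : ((2 * 2 ^ k : ℕ) : ℤ) * (z / ((2 * 2 ^ k : ℕ) : ℤ)) =
                    (z / ((2 * 2 ^ k : ℕ) : ℤ)) * ((2 * 2 ^ k : ℕ) : ℤ) := mul_comm _ _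
                rw [hc, mul_zsmul, hNz, smul_zero, zero_add]
        refine ⟨(z % ((2 * 2 ^ k : ℕ) : ℤ)).toNat, ?_⟩
        have h4 : (((z % ((2 * 2 ^ k : ℕ) : ℤ)).toNat : ℤ)) • j₀ = x := by
          rw [hmod, ← hzdecomp]; exact hz'
        exact (natCast_zsmul j₀ _).symm.trans h4
      have apow : ∀ (u : ℕ) (j : ZMod (2 * 2 ^ k)),
          (QuaternionGroup.a j : QuaternionGroup (2 ^ k)) ^ u = QuaternionGroup.a (u • j) := by
        intro u j
        induction u with
        | zero => rw [pow_zero, zero_nsmul, QuaternionGroup.one_def]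
        | succ u ih => rw [pow_succ, ih, QuaternionGroup.a_mul_a, ← succ_nsmul]
      refine ⟨(QuaternionGroup.a j₀, 0), hj₀, ?_⟩
      ext y
      simp only [Set.mem_setOf_eq]
      constructor
      · intro hy
        obtain ⟨j, rfl⟩ := hall y hy
        obtain ⟨u, hu⟩ := key j hy
        exact ⟨u, by rw [opow_snd_zero, apow, hu]⟩
      · rintro ⟨u, rfl⟩
        rw [opow_snd_zero, apow]
        exact hsmul u j₀ hj₀
end
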